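/- arXiv:1804.09939 — 3 statements merged into one kernel-verified Lean document; each statement's English description precedes it below -/
import Mathlib

section
/- Let n ≥ 2 be an integer, let ε ∈ {1, -1}, and let r be an arbitrary integer. Then the Laurent polynomial 1 - t + t² - ε·t^r does not belong to the ideal I(1 - tⁿ) of ℤ[t,t⁻¹]. (In the paper this is the key algebraic claim in the proof that the trefoil knot is not V^n-equivalent to the unknot for n ≥ 2: the first Alexander polynomial 1 - t + t² of the trefoil is not congruent to ε t^r · 1 modulo I(1 - tⁿ).) -/
open LaurentPolynomial

/-- For `n ≥ 2`, `ε ∈ {1, -1}` and `r : ℤ`, the Laurent polynomial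
`1 - t + t² - ε·tʳ` is not in the ideal of `ℤ[t,t⁻¹]` generated by `1 - tⁿ`. -/
theorem trefoil_alexander_not_in_ideal (n : ℕ) (hn : 2 ≤ n) (ε : ℤ) (hε : ε = 1 ∨ ε = -1)
    (r : ℤ) :
    (1 - LaurentPolynomial.T 1 + LaurentPolynomial.T 2 - (ε : LaurentPolynomial ℤ) *
        LaurentPolynomial.T r) ∉
      Ideal.span ({1 - LaurentPolynomial.T (n : ℤ)} : Set (LaurentPolynomial ℤ)) := by
  haveI : Fact (1 < n) := ⟨hn⟩
  intro hmem
  rw [Ideal.mem_span_singleton] at hmem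
  obtain ⟨c, hc⟩ := hmem
  let φ : LaurentPolynomial ℤ →+* AddMonoidAlgebra ℤ (ZMod n) :=
    AddMonoidAlgebra.mapDomainRingHom ℤ (Int.castAddHom (ZMod n))
  have hT : ∀ a : ℤ, φ (T a) = AddMonoidAlgebra.single ((a : ZMod n)) 1 := by
    intro a
    show AddMonoidAlgebra.mapDomain _ (AddMonoidAlgebra.single a 1) = _
    rw [AddMonoidAlgebra.mapDomain_single]; rfl
  have hone : φ 1 = AddMonoidAlgebra.single (0 : ZMod n) 1 := by
    rw [map_one]; rfl
  have h0 : φ (1 - T (n : ℤ)) = 0 := by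
    rw [map_sub, hT, hone]
    norm_num
  have heq : φ (1 - T 1 + T 2 - (ε : LaurentPolynomial ℤ) * T r) = 0 := by
    rw [hc, map_mul, h0, zero_mul]
  have hcast : φ ((ε : LaurentPolynomial ℤ)) = AddMonoidAlgebra.single (0 : ZMod n) ε := by
    rcases hε with h | h <;> subst h
    · simpa using hone
    · push_cast
      rw [map_neg, hone]
      simp [AddMonoidAlgebra.single_neg]
  rw [map_sub, map_add, map_sub, map_mul, hone, hT, hT, hT, hcast] at heq
  have h2 : ((2 : ℤ) : ZMod n) = (2 : ZMod n) := by push_cast; ring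
  have h1 : ((1 : ℤ) : ZMod n) = (1 : ZMod n) := by push_cast; ring
  rw [h1, h2, AddMonoidAlgebra.single_mul_single, zero_add, mul_one] at heq
  have heq' : ((Finsupp.single (0:ZMod n) (1:ℤ) - Finsupp.single 1 1 + Finsupp.single 2 1)
      - Finsupp.single ((r : ZMod n)) ε : ZMod n →₀ ℤ) = 0 := congrArg AddMonoidAlgebra.coeff heq
  have e01 : ¬ ((0 : ZMod n) = 1) := zero_ne_one
  have e21 : ¬ ((2 : ZMod n) = 1) := by
    intro h
    have : (1 : ZMod n) = 0 := by linear_combination h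
    exact one_ne_zero this
  by_cases hs : ((r : ZMod n) = 0)
  · have h1' := Finsupp.ext_iff.mp heq' (1 : ZMod n)
    rw [hs] at h1'
    simp only [Finsupp.sub_apply, Finsupp.add_apply, Finsupp.single_apply,
      Finsupp.coe_zero, Pi.zero_apply, e01, e21, if_true, if_false] at h1'
    omega
  · have h0' := Finsupp.ext_iff.mp heq' (0 : ZMod n)
    have e10 : ¬ ((1 : ZMod n) = 0) := one_ne_zero
    simp only [Finsupp.sub_apply, Finsupp.add_apply, Finsupp.single_apply,
      Finsupp.coe_zero, Pi.zero_apply, e10, hs, if_true, if_false] at h0'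
    by_cases h20 : ((2 : ZMod n) = 0)
    · simp only [h20, if_true, if_pos] at h0'; omega
    · simp only [h20, if_false, if_neg] at h0'; omega
end

section
/- Let n ≥ 2 be an integer, let ε ∈ {1, -1}, and let r be an arbitrary integer. Let f_n : ℤ[t,t⁻¹] → ℤ be the map sending a Laurent polynomial ∑ᵢ aᵢ tⁱ to the (finite) sum of those coefficients aᵢ whose exponent i satisfies i ≡ 0 (mod n) or i ≡ 2 (mod n). Then f_n(1 - t + t² - ε·t^r) ≠ 0. -/
open LaurentPolynomial

/-- `f_n` sends a Laurent polynomial `∑ᵢ aᵢ tⁱ` to the sum of those coefficients `aᵢ`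
whose exponent `i` satisfies `i ≡ 0 (mod n)` or `i ≡ 2 (mod n)`. -/
noncomputable def fn (n : ℕ) (p : LaurentPolynomial ℤ) : ℤ :=
  Finsupp.sum (AddMonoidAlgebra.coeff p : ℤ →₀ ℤ)
    (fun i a => if i ≡ 0 [ZMOD (n : ℤ)] ∨ i ≡ 2 [ZMOD (n : ℤ)] then a else 0)

lemma fn_single' (n : ℕ) (i a : ℤ) :
    fn n (AddMonoidAlgebra.ofCoeff (Finsupp.single i a : ℤ →₀ ℤ)) =
      if i ≡ 0 [ZMOD (n : ℤ)] ∨ i ≡ 2 [ZMOD (n : ℤ)] then a else 0 := by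
  unfold fn
  exact Finsupp.sum_single_index (by simp)

lemma fn_add' (n : ℕ) (p q : LaurentPolynomial ℤ) : fn n (p + q) = fn n p + fn n q := by
  unfold fn
  rw [AddMonoidAlgebra.coeff_add]
  exact Finsupp.sum_add_index' (fun i => by simp) (fun i a b => by split <;> simp)

lemma fn_neg' (n : ℕ) (p : LaurentPolynomial ℤ) : fn n (-p) = -fn n p := by
  unfold fn
  rw [AddMonoidAlgebra.coeff_neg, Finsupp.sum_neg_index (by simp), ← Finsupp.sum_neg]
  congr 1; ext i a; split <;> simp

/-- For `n ≥ 2`, `ε ∈ {1, -1}` and `r : ℤ`,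
`f_n(1 - t + t² - ε·tʳ) ≠ 0`. -/
theorem fn_trefoil_ne_zero (n : ℕ) (hn : 2 ≤ n) (ε : ℤ) (hε : ε = 1 ∨ ε = -1) (r : ℤ) :
    fn n (1 - LaurentPolynomial.T 1 + LaurentPolynomial.T 2 -
      (ε : LaurentPolynomial ℤ) * LaurentPolynomial.T r) ≠ 0 := by
  have h1 : (1 : LaurentPolynomial ℤ) = AddMonoidAlgebra.ofCoeff (Finsupp.single (0:ℤ) (1:ℤ) : ℤ →₀ ℤ) := rfl
  have h2 : (T 1 : LaurentPolynomial ℤ) = AddMonoidAlgebra.ofCoeff (Finsupp.single (1:ℤ) (1:ℤ) : ℤ →₀ ℤ) := rfl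
  have h3 : (T 2 : LaurentPolynomial ℤ) = AddMonoidAlgebra.ofCoeff (Finsupp.single (2:ℤ) (1:ℤ) : ℤ →₀ ℤ) := rfl
  have h4 : (ε : LaurentPolynomial ℤ) * T r = AddMonoidAlgebra.ofCoeff (Finsupp.single r ε : ℤ →₀ ℤ) := by
    rw [← eq_intCast (LaurentPolynomial.C : ℤ →+* LaurentPolynomial ℤ) ε,
      ← LaurentPolynomial.single_eq_C_mul_T]
    rfl
  rw [sub_eq_add_neg, sub_eq_add_neg, h1, h2, h3, h4,
    fn_add', fn_add', fn_add', fn_neg', fn_neg', fn_single', fn_single', fn_single',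
    fn_single']
  have c0 : (0:ℤ) ≡ 0 [ZMOD (n:ℤ)] ∨ (0:ℤ) ≡ 2 [ZMOD (n:ℤ)] := Or.inl (Int.ModEq.refl 0)
  have c2 : (2:ℤ) ≡ 0 [ZMOD (n:ℤ)] ∨ (2:ℤ) ≡ 2 [ZMOD (n:ℤ)] := Or.inr (Int.ModEq.refl 2)
  have c1 : ¬((1:ℤ) ≡ 0 [ZMOD (n:ℤ)] ∨ (1:ℤ) ≡ 2 [ZMOD (n:ℤ)]) := by
    rintro (h | h) <;>
    · have hd : (n:ℤ) ∣ 1 := by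
        have := Int.ModEq.dvd h
        first
          | exact dvd_neg.mp (by simpa using this)
          | simpa using this
      have := Int.le_of_dvd one_pos hd
      omega
  rw [if_pos c0, if_neg c1, if_pos c2]
  rcases hε with rfl | rfl <;> split <;> norm_num
end

section
/- Let n ≥ 2 be an integer. In the quotient ring ℤ[t,t⁻¹]/I(1 - tⁿ), the image of the Laurent polynomial 1 - t + t² is not equal to the image of ε·t^r for any ε ∈ {1, -1} and any integer r. (This expresses, at the level of Alexander polynomials modulo I(1 - tⁿ), that the trefoil knot is not V^n-equivalent to the unknot for any n ≥ 2.) -/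
open LaurentPolynomial

/-- For `n ≥ 2`, in the quotient ring `ℤ[t,t⁻¹]/I(1 - tⁿ)`, the image of
`1 - t + t²` differs from the image of `ε·tʳ` for every `ε ∈ {1, -1}` and every `r : ℤ`. -/
theorem trefoil_ne_unit_in_quotient (n : ℕ) (hn : 2 ≤ n) :
    ∀ (ε : ℤ), (ε = 1 ∨ ε = -1) → ∀ (r : ℤ),
      Ideal.Quotient.mk
          (Ideal.span ({1 - LaurentPolynomial.T (n : ℤ)} : Set (LaurentPolynomial ℤ)))
          (1 - LaurentPolynomial.T 1 + LaurentPolynomial.T 2) ≠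
        Ideal.Quotient.mk
          (Ideal.span ({1 - LaurentPolynomial.T (n : ℤ)} : Set (LaurentPolynomial ℤ)))
          ((ε : LaurentPolynomial ℤ) * LaurentPolynomial.T r) := by
  intro ε hε r h
  haveI : Fact (1 < n) := ⟨by omega⟩
  rw [Ideal.Quotient.eq] at h
  obtain ⟨c, hc⟩ := Ideal.mem_span_singleton'.mp h
  set φ := AddMonoidAlgebra.mapDomainRingHom ℤ (Int.castAddHom (ZMod n)) with hφ
  have hT : ∀ m : ℤ, φ (T m) = AddMonoidAlgebra.single ((m : ZMod n)) (1 : ℤ) := by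
    intro m
    show AddMonoidAlgebra.mapDomain _ (AddMonoidAlgebra.single m 1) = _
    rw [AddMonoidAlgebra.mapDomain_single]
    rfl
  have hone : AddMonoidAlgebra.single (0 : ZMod n) (1 : ℤ) = (1 : AddMonoidAlgebra ℤ (ZMod n)) := AddMonoidAlgebra.one_def.symm
  have hn0 : (((n : ℤ)) : ZMod n) = 0 := by push_cast; exact ZMod.natCast_self n
  have hg : φ (1 - T (n : ℤ)) = 0 := by
    rw [map_sub, hT, hn0, map_one, hone, sub_self]
  have h2 : φ (1 - T 1 + T 2) = φ ((ε : LaurentPolynomial ℤ) * T r) := by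
    have h3 := congrArg φ hc
    rw [map_mul, hg, mul_zero] at h3
    have h5 : φ (1 - T 1 + T 2) - φ ((ε : LaurentPolynomial ℤ) * T r) = 0 := by
      rw [← map_sub]; exact h3.symm
    exact sub_eq_zero.mp h5
  rw [show ((ε : ℤ) : LaurentPolynomial ℤ) * T r = ε • T r from (zsmul_eq_mul _ _).symm] at h2
  rw [map_add, map_sub, map_one, map_zsmul, hT, hT, hT, AddMonoidAlgebra.smul_single, smul_eq_mul,
    mul_one, ← hone] at h2
  have h1ne : (1 : ZMod n) ≠ 0 := one_ne_zero
  have h01 : ((0 : ZMod n)) ≠ ((1 : ℤ) : ZMod n) := by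
    push_cast; exact fun hh => h1ne hh.symm
  have h21 : ((2 : ℤ) : ZMod n) ≠ ((1 : ℤ) : ZMod n) := by
    intro hh
    apply h1ne
    have : ((2 : ℤ) : ZMod n) - ((1 : ℤ) : ZMod n) = 0 := by rw [hh]; ring
    push_cast at this ⊢
    linear_combination this
  have h2' : (AddMonoidAlgebra.single (0 : ZMod n) (1 : ℤ)) - AddMonoidAlgebra.single (((1:ℤ) : ZMod n)) 1
      + AddMonoidAlgebra.single (((2:ℤ) : ZMod n)) 1 = AddMonoidAlgebra.single (((r:ℤ) : ZMod n)) ε := h2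
  have e1 := congrArg (fun x => AddMonoidAlgebra.coeff x ((1 : ℤ) : ZMod n)) h2'
  have e0 := congrArg (fun x => AddMonoidAlgebra.coeff x (0 : ZMod n)) h2'
  simp only [AddMonoidAlgebra.coeff_add, AddMonoidAlgebra.coeff_sub, AddMonoidAlgebra.coeff_single, Finsupp.coe_add, Finsupp.coe_sub, Pi.add_apply, Pi.sub_apply, Finsupp.sub_apply, Finsupp.add_apply, Finsupp.single_apply] at e1 e0
  rw [if_pos trivial, if_neg h21] at e1
  rw [if_pos trivial, if_neg (fun hh => h01 hh.symm)] at e0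
  split_ifs at e1 e0 <;> first | omega | exact absurd ‹(0 : ZMod n) = ((1:ℤ) : ZMod n)› h01
end
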